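/- Let q(z) = q₀z² + 2q₁z + q₂ be a nonzero real quadratic with polarization q(x,y) = q₀xy + q₁(x+y) + q₂, and let Π be a real polynomial of degree at most 4. Then q(x,y)²Π''(x) − 6(q₀y + q₁)q(x,y)Π'(x) + 12(q₀y + q₁)²Π(x) + q(x,y)²Π''(y) − 6(q₀x + q₁)q(x,y)Π'(y) + 12(q₀x + q₁)²Π(y) = 0 for all real x, y if and only if there exists a real quadratic π with ⟨π,q⟩ = 0 such that Π(z) = q(z)π(z) for all z. -/

import Mathlib

/-- Symmetric part of the extremality equation for `g₊`: for a nonzero quadratic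
`q(z) = q₀z² + 2q₁z + q₂` with polarization `q(x,y) = q₀xy + q₁(x+y) + q₂`, and a
quartic `Π(z) = d₀z⁴ + d₁z³ + d₂z² + d₃z + d₄`, the identity
`q(x,y)²Π''(x) − 6(q₀y+q₁)q(x,y)Π'(x) + 12(q₀y+q₁)²Π(x)
 + q(x,y)²Π''(y) − 6(q₀x+q₁)q(x,y)Π'(y) + 12(q₀x+q₁)²Π(y) = 0`
holds for all `x`, `y` iff `Π = qπ` for some quadratic `π` orthogonal to `q`. -/
theorem ambitoric_symmetric_part_classification
    (q0 q1 q2 : ℝ) (hq : ¬(q0 = 0 ∧ q1 = 0 ∧ q2 = 0))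
    (d0 d1 d2 d3 d4 : ℝ) :
    (∀ x y : ℝ,
      (q0 * x * y + q1 * (x + y) + q2) ^ 2 * (12 * d0 * x ^ 2 + 6 * d1 * x + 2 * d2)
        - 6 * (q0 * y + q1) * (q0 * x * y + q1 * (x + y) + q2) *
            (4 * d0 * x ^ 3 + 3 * d1 * x ^ 2 + 2 * d2 * x + d3)
        + 12 * (q0 * y + q1) ^ 2 * (d0 * x ^ 4 + d1 * x ^ 3 + d2 * x ^ 2 + d3 * x + d4)
        + (q0 * x * y + q1 * (x + y) + q2) ^ 2 * (12 * d0 * y ^ 2 + 6 * d1 * y + 2 * d2)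
        - 6 * (q0 * x + q1) * (q0 * x * y + q1 * (x + y) + q2) *
            (4 * d0 * y ^ 3 + 3 * d1 * y ^ 2 + 2 * d2 * y + d3)
        + 12 * (q0 * x + q1) ^ 2 * (d0 * y ^ 4 + d1 * y ^ 3 + d2 * y ^ 2 + d3 * y + d4)
        = 0)
    ↔ ∃ π0 π1 π2 : ℝ, 2 * π1 * q1 - (π2 * q0 + π0 * q2) = 0 ∧
        ∀ z : ℝ, d0 * z ^ 4 + d1 * z ^ 3 + d2 * z ^ 2 + d3 * z + d4
          = (q0 * z ^ 2 + 2 * q1 * z + q2) * (π0 * z ^ 2 + 2 * π1 * z + π2) := by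
  constructor
  · intro h
    have hE00 : 4*q2^2*d2 - 12*q1*q2*d3 + 24*q1^2*d4 = 0 := by linear_combination h 0 0
    have hE01 : 6*q2^2*d1 - 4*q1*q2*d2 - 6*q0*q2*d3 + 24*q0*q1*d4 = 0 := by
      linear_combination (h 1 0 - h (-1) 0)/2
    have hE02 : 12*q2^2*d0 - 6*q1*q2*d1 + 4*q1^2*d2 - 6*q0*q1*d3 + 12*q0^2*d4 = 0 := by
      linear_combination (h 1 0 + h (-1) 0)/2 - h 0 0
    have hE11 : 24*q1*q2*d1 - 16*(q1^2+q0*q2)*d2 + 24*q0*q1*d3 = 0 := by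
      linear_combination (h 1 1 + h (-1) (-1))/4 - (h 1 (-1))/2
    have hE12 : 24*q1*q2*d0 - 6*q0*q2*d1 - 4*q0*q1*d2 + 6*q0^2*d3 = 0 := by
      linear_combination (h 1 1 - h (-1) (-1))/4 - (h 1 0 - h (-1) 0)/2
    have hE22 : 24*q1^2*d0 - 12*q0*q1*d1 + 4*q0^2*d2 = 0 := by
      linear_combination (h 1 1 + h (-1) (-1))/4 + (h 1 (-1))/2 + h 0 0 - (h 1 0 + h (-1) 0)
    by_cases h0 : q0 = 0
    · by_cases h2 : q2 = 0
      · have h1 : q1 ≠ 0 := by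
          intro h1; exact hq ⟨h0, h1, h2⟩
        subst h0; subst h2
        have hd0 : d0 = 0 := by
          have h' : q1^2 * d0 = 0 := by linear_combination hE22/24
          exact (mul_eq_zero.mp h').resolve_left (pow_ne_zero 2 h1)
        have hd2 : d2 = 0 := by
          have h' : q1^2 * d2 = 0 := by linear_combination hE02/4
          exact (mul_eq_zero.mp h').resolve_left (pow_ne_zero 2 h1)
        have hd4 : d4 = 0 := by
          have h' : q1^2 * d4 = 0 := by linear_combination hE00/24
          exact (mul_eq_zero.mp h').resolve_left (pow_ne_zero 2 h1)
        refine ⟨d1/(2*q1), 0, d3/(2*q1), by ring, fun z => ?_⟩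
        rw [hd0, hd2, hd4]
        field_simp
        ring
      · -- q0 = 0, q2 ≠ 0
        subst h0
        refine ⟨(q2^2*d2 - 2*q1*q2*d3 + 4*q1^2*d4)/q2^3,
                (q2*d3 - 2*q1*d4)/(2*q2^2), d4/q2, ?_, fun z => ?_⟩
        · field_simp
          linear_combination (-1/4 : ℝ) * hE00
        · have H0 : q2^3 * d0 = 0 := by
            linear_combination (q2/12)*hE02 + (q2/16)*hE11 - (q1/6)*hE01
          have H1 : q2^3 * d1 = 2*q1*(q2^2*d2 - 2*q1*q2*d3 + 4*q1^2*d4) := by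
            linear_combination (q2/6)*hE01 - (q1/3)*hE00
          field_simp
          linear_combination (z^4) * H0 + (z^3) * H1
    · -- q0 ≠ 0
      refine ⟨d0/q0, (q0*d1 - 2*q1*d0)/(2*q0^2),
              (q0^2*d2 - 2*q0*q1*d1 + (4*q1^2 - q0*q2)*d0)/q0^3, ?_, fun z => ?_⟩
      · field_simp
        linear_combination (-1/4 : ℝ) * hE22
      · have H3 : q0^3 * d3 = 2*q1*(q0^2*d2 - 2*q0*q1*d1 + (4*q1^2 - q0*q2)*d0)
            + q0*q2*(q0*d1 - 2*q1*d0) := by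
          linear_combination (q0/6)*hE12 - (q1/3)*hE22
        have H4 : q0^3 * d4 = q2*(q0^2*d2 - 2*q0*q1*d1 + (4*q1^2 - q0*q2)*d0) := by
          linear_combination (q0/12)*hE02 + (q0/16)*hE11 - (q1/6)*hE12
        field_simp
        linear_combination z * H3 + H4
  · rintro ⟨p0, p1, p2, horth, hpi⟩
    have hd0 : d0 = q0*p0 := by
      linear_combination (hpi 2 + hpi (-2))/24 - (hpi 1 + hpi (-1))/6 + (hpi 0)/4
    have hd1 : d1 = 2*q0*p1 + 2*q1*p0 := by
      linear_combination (hpi 2 - hpi (-2))/12 - (hpi 1 - hpi (-1))/6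
    have hd2 : d2 = q0*p2 + 4*q1*p1 + q2*p0 := by
      linear_combination -(hpi 2 + hpi (-2))/24 + (hpi 1 + hpi (-1))*(2/3) - (hpi 0)*(5/4)
    have hd3 : d3 = 2*q1*p2 + 2*q2*p1 := by
      linear_combination -(hpi 2 - hpi (-2))/12 + (hpi 1 - hpi (-1))*(2/3)
    have hd4 : d4 = q2*p2 := by linear_combination hpi 0
    intro x y
    linear_combination
      (12*q2^2*y^2 + 12*q2^2*x^2 + 24*q1*q2*x*y^2 + 24*q1*q2*x^2*y + 24*q1^2*x^2*y^2) * hd0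
      + (6*q2^2*y + 6*q2^2*x - 6*q1*q2*y^2 + 24*q1*q2*x*y - 6*q1*q2*x^2 - 6*q0*q2*x*y^2
          - 6*q0*q2*x^2*y - 12*q0*q1*x^2*y^2) * hd1
      + (4*q2^2 - 4*q1*q2*y - 4*q1*q2*x + 4*q1^2*y^2 - 16*q1^2*x*y + 4*q1^2*x^2
          - 16*q0*q2*x*y - 4*q0*q1*x*y^2 - 4*q0*q1*x^2*y + 4*q0^2*x^2*y^2) * hd2
      + (-12*q1*q2 - 6*q0*q2*y - 6*q0*q2*x - 6*q0*q1*y^2 + 24*q0*q1*x*y - 6*q0*q1*x^2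
          + 6*q0^2*x*y^2 + 6*q0^2*x^2*y) * hd3
      + (24*q1^2 + 24*q0*q1*y + 24*q0*q1*x + 12*q0^2*y^2 + 12*q0^2*x^2) * hd4
      + (-4*q2^2 - 8*q1*q2*y - 8*q1*q2*x + 8*q1^2*y^2 - 32*q1^2*x*y + 8*q1^2*x^2
          - 12*q0*q2*y^2 + 16*q0*q2*x*y - 12*q0*q2*x^2 - 8*q0*q1*x*y^2 - 8*q0*q1*x^2*y
          - 4*q0^2*x^2*y^2) * horth
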